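/- Fix positive real numbers x_1, ..., x_m and let E_1, ..., E_m be independent exponential random variables with E_i having rate x_i. Fix t > 0 and set S = x_1·1{E_1 ≤ t} + ... + x_m·1{E_m ≤ t}. Then P(S < E[S]/2) ≤ exp(-t·E[S]/4). -/

import Mathlib

open MeasureTheory ProbabilityTheory Real


lemma aux_log_ge (s : ℝ) (hs : 0 < s) (hs1 : s ≤ 1) : (s - 1/s) / 2 ≤ Real.log s := by
  have hw : 0 ≤ -Real.log s := by
    have := Real.log_nonpos hs.le hs1; linarith
  have h := Real.self_le_sinh_iff.mpr hw
  rw [Real.sinh_eq, neg_neg, Real.exp_neg, Real.exp_log hs] at h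
  have h1s : 1/s = s⁻¹ := one_div s
  linarith

lemma aux_poly (r : ℝ) (h0 : 0 ≤ r) (h1 : r ≤ 1) :
    0 ≤ 3*r^4 + 6*r^3 - 3*r^2 - 4*r + 2 := by
  nlinarith [sq_nonneg (r - 1/2), sq_nonneg (r*(r-1/2)), sq_nonneg (r^2 - 1/2), sq_nonneg r, sq_nonneg (r-1)]

-- G(s) = 2 + s - 3 s^2 + 3 s (2-s) log s ≥ 0 on (0,1]
lemma aux_G (s : ℝ) (hs : 0 < s) (hs1 : s ≤ 1) :
    0 ≤ 2 + s - 3*s^2 + 3*s*(2-s)*Real.log s := by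
  set r := Real.sqrt s with hr
  have hr0 : 0 < r := Real.sqrt_pos.mpr hs
  have hr1 : r ≤ 1 := by
    rw [hr, show (1:ℝ) = Real.sqrt 1 by simp]
    exact Real.sqrt_le_sqrt hs1
  have hrs : r^2 = s := Real.sq_sqrt hs.le
  have hlog : (r^2 - 1)/r ≤ Real.log s := by
    have := aux_log_ge r hr0 hr1
    have hls : Real.log s = 2 * Real.log r := by
      rw [← hrs, Real.log_pow]; push_cast; ring
    rw [hls]
    rw [div_le_iff₀ hr0] at *
    have h2 : (r - 1/r)/2 ≤ Real.log r := aux_log_ge r hr0 hr1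
    have : 1/r = r⁻¹ := one_div r
    have hrr : r * r⁻¹ = 1 := mul_inv_cancel₀ hr0.ne'
    nlinarith [h2]
  have hcoef : 0 ≤ 3*s*(2-s) := by nlinarith
  have key : 3*s*(2-s)*((r^2-1)/r) ≤ 3*s*(2-s)*Real.log s :=
    mul_le_mul_of_nonneg_left hlog hcoef
  have hexp : 3*s*(2-s)*((r^2-1)/r) = 3*r*(2-r^2)*(r^2-1) := by
    rw [← hrs]; field_simp
  have hfact : 2 + s - 3*s^2 + 3*r*(2-r^2)*(r^2-1)
      = (1-r) * (3*r^4 + 6*r^3 - 3*r^2 - 4*r + 2) := by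
    rw [← hrs]; ring
  have := aux_poly r hr0.le hr1
  nlinarith [key, hexp, hfact, mul_nonneg (by linarith : (0:ℝ) ≤ 1-r) this]


noncomputable def auxF : ℝ → ℝ :=
  fun v => v * (1 + 3 * Real.exp (-v)) / 4 - Real.log (2 - Real.exp (-v))

lemma aux_argpos (v : ℝ) (hv : 0 ≤ v) : 0 < 2 - Real.exp (-v) := by
  have : Real.exp (-v) ≤ 1 := Real.exp_le_one_iff.mpr (by linarith)
  linarith

lemma aux_hasDeriv (v : ℝ) (hv : 0 < v) :
    HasDerivAt auxF ((1 + 3*Real.exp (-v))/4 + v * (3 * -Real.exp (-v))/4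
      - Real.exp (-v) / (2 - Real.exp (-v))) v := by
  have h1 : HasDerivAt (fun w : ℝ => Real.exp (-w)) (-Real.exp (-v)) v := by
    simpa using (hasDerivAt_neg v).exp
  have h2 : HasDerivAt (fun w : ℝ => 2 - Real.exp (-w)) (Real.exp (-v)) v := by
    simpa using h1.const_sub (2:ℝ)
  have h3 : HasDerivAt (fun w : ℝ => Real.log (2 - Real.exp (-w)))
      (Real.exp (-v) / (2 - Real.exp (-v))) v := h2.log (aux_argpos v hv.le).ne'
  have h4 : HasDerivAt (fun w : ℝ => w * (1 + 3 * Real.exp (-w)) / 4)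
      ((1 * (1 + 3*Real.exp (-v)) + v * (3 * -Real.exp (-v)))/4) v := by
    have := (((hasDerivAt_id v).mul ((hasDerivAt_const v (1:ℝ)).add (h1.const_mul 3))).div_const 4)
    simpa using this
  have := h4.sub h3
  rw [show (1 + 3*Real.exp (-v))/4 + v * (3 * -Real.exp (-v))/4 - Real.exp (-v) / (2 - Real.exp (-v)) = (1 * (1 + 3*Real.exp (-v)) + v * (3 * -Real.exp (-v)))/4 - Real.exp (-v) / (2 - Real.exp (-v)) by ring]
  exact this

lemma aux_F_nonneg (u : ℝ) (hu : 0 ≤ u) : 0 ≤ auxF u := by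
  have hmono : MonotoneOn auxF (Set.Ici (0:ℝ)) := by
    apply monotoneOn_of_deriv_nonneg (convex_Ici 0)
    · apply ContinuousOn.sub
      · fun_prop
      · apply ContinuousOn.log
        · fun_prop
        · intro v hv; exact (aux_argpos v hv).ne'
    · intro v hv
      rw [interior_Ici] at hv
      exact (aux_hasDeriv v hv).differentiableAt.differentiableWithinAt
    · intro v hv
      rw [interior_Ici] at hv
      have hv0 : (0:ℝ) < v := hv
      rw [(aux_hasDeriv v hv0).deriv]
      set s := Real.exp (-v) with hsdef
      have hs0 : 0 < s := Real.exp_pos _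
      have hs1 : s ≤ 1 := Real.exp_le_one_iff.mpr (by linarith [hv0])
      have hlogs : Real.log s = -v := Real.log_exp _
      have hG := aux_G s hs0 hs1
      rw [hlogs] at hG
      have h2s : 0 < 2 - s := by linarith
      rw [sub_nonneg, div_le_iff₀ h2s]
      nlinarith [hG]
  have h0 : auxF 0 = 0 := by norm_num [auxF]
  have := hmono (Set.self_mem_Ici) (Set.mem_Ici.mpr hu) hu
  linarith [this]

lemma aux_key (u : ℝ) (hu : 0 ≤ u) :
    Real.exp (-u) * (2 - Real.exp (-u)) ≤ Real.exp (-(3 * (u * (1 - Real.exp (-u)))) / 4) := by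
  have h := aux_F_nonneg u hu
  unfold auxF at h
  have harg := aux_argpos u hu
  have hlog : Real.log (2 - Real.exp (-u)) ≤ u * (1 + 3 * Real.exp (-u)) / 4 := by linarith
  have h2 : 2 - Real.exp (-u) ≤ Real.exp (u * (1 + 3 * Real.exp (-u)) / 4) :=
    (Real.log_le_iff_le_exp harg).mp hlog
  calc Real.exp (-u) * (2 - Real.exp (-u))
      ≤ Real.exp (-u) * Real.exp (u * (1 + 3 * Real.exp (-u)) / 4) :=
        mul_le_mul_of_nonneg_left h2 (Real.exp_pos _).le
    _ = Real.exp (-u + u * (1 + 3 * Real.exp (-u)) / 4) := (Real.exp_add _ _).symm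
    _ = Real.exp (-(3 * (u * (1 - Real.exp (-u)))) / 4) := by ring_nf


/-- For independent exponential random variables `E i` with rates `x i > 0`,
`t > 0` and `S = ∑ i, x i · 1{E i ≤ t}`,
`P(S < E[S]/2) ≤ exp(-t·E[S]/4)`. -/
theorem stmt5
    {Ω : Type*} [MeasurableSpace Ω] (μ : Measure Ω) [IsProbabilityMeasure μ]
    (m : ℕ) (x : Fin m → ℝ) (hx : ∀ i, 0 < x i)
    (E : Fin m → Ω → ℝ) (hmeas : ∀ i, Measurable (E i))
    (hindep : iIndepFun E μ)
    (hlaw : ∀ i, ∀ s : ℝ, 0 ≤ s →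
      μ {ω | s < E i ω} = ENNReal.ofReal (Real.exp (-(x i) * s)))
    (t : ℝ) (ht : 0 < t)
    (S : Ω → ℝ) (hS : ∀ ω, S ω = ∑ i, x i * (if E i ω ≤ t then 1 else 0))
    (ES : ℝ) (hES : ES = ∑ i, x i * (1 - Real.exp (-(x i) * t))) :
    (μ {ω | S ω < ES / 2}).toReal ≤ Real.exp (-(t * ES) / 4) := by
  classical
  set g : Fin m → ℝ → ℝ := fun i y => if y ≤ t then Real.exp (-(t * x i)) else 1 with hg
  set Y : Fin m → Ω → ℝ := fun i => g i ∘ E i with hY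
  have hgmeas : ∀ i, Measurable (g i) := by
    intro i
    exact Measurable.ite measurableSet_Iic measurable_const measurable_const
  have hYmeas : ∀ i, Measurable (Y i) := fun i => (hgmeas i).comp (hmeas i)
  have hYindep : iIndepFun Y μ := hindep.comp g hgmeas
  have hYpos : ∀ i ω, 0 < Y i ω := by
    intro i ω
    simp only [hY, hg, Function.comp_apply]
    split <;> [exact Real.exp_pos _; norm_num]
  have hYle : ∀ i ω, Y i ω ≤ 1 := by
    intro i ω
    simp only [hY, hg, Function.comp_apply]
    split
    · exact Real.exp_le_one_iff.mpr (by nlinarith [hx i, ht])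
    · exact le_refl 1
  have hYint : ∀ i, Integrable (Y i) μ := by
    intro i
    refine Integrable.mono' (integrable_const (1:ℝ)) (hYmeas i).aestronglyMeasurable ?_
    exact Filter.Eventually.of_forall fun ω => by
      rw [Real.norm_eq_abs, abs_of_pos (hYpos i ω)]; exact hYle i ω
  have hprodint : ∀ s : Finset (Fin m), Integrable (fun ω => ∏ i ∈ s, Y i ω) μ := by
    intro s
    refine Integrable.mono' (integrable_const (1:ℝ))
      (Finset.measurable_prod s fun i _ => hYmeas i).aestronglyMeasurable ?_
    refine Filter.Eventually.of_forall fun ω => ?_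
    rw [Real.norm_eq_abs, abs_of_pos (Finset.prod_pos fun i _ => hYpos i ω)]
    exact Finset.prod_le_one (fun i _ => (hYpos i ω).le) (fun i _ => hYle i ω)
  have hprod : ∀ s : Finset (Fin m),
      ∫ ω, ∏ i ∈ s, Y i ω ∂μ = ∏ i ∈ s, ∫ ω, Y i ω ∂μ := by
    intro s
    induction s using Finset.induction_on with
    | empty => simp
    | @insert a s' ha ih =>
      have hfun : (∏ j ∈ s', Y j) = fun ω => ∏ j ∈ s', Y j ω := by
        funext ω; simp [Finset.prod_apply]
      have hindep2 : IndepFun (Y a) (fun ω => ∏ j ∈ s', Y j ω) μ := by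
        have h := hYindep.indepFun_finsetProd_of_notMem hYmeas ha
        rw [hfun] at h
        exact h.symm
      have := hindep2.integral_mul_eq_mul_integral (hYint a).aestronglyMeasurable (hprodint s').aestronglyMeasurable
      simp only [Finset.prod_insert ha]
      rw [← ih, ← this]
      congr 1
  have hYint_eq : ∀ i, ∫ ω, Y i ω ∂μ
      = 1 + (Real.exp (-(t * x i)) - 1) * (1 - Real.exp (-(x i) * t)) := by
    intro i
    set A : Set Ω := {ω | E i ω ≤ t} with hA
    have hAmeas : MeasurableSet A := measurableSet_le (hmeas i) measurable_const
    have hAc : Aᶜ = {ω | t < E i ω} := by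
      ext ω; simp [hA, not_le]
    have hμAc : (μ Aᶜ).toReal = Real.exp (-(x i) * t) := by
      rw [hAc, hlaw i t ht.le, ENNReal.toReal_ofReal (Real.exp_pos _).le]
    have hsum : (μ A).toReal + (μ Aᶜ).toReal = 1 := by
      rw [← ENNReal.toReal_add (measure_ne_top μ A) (measure_ne_top μ Aᶜ),
        measure_add_measure_compl hAmeas, measure_univ, ENNReal.toReal_one]
    have hμA : (μ A).toReal = 1 - Real.exp (-(x i) * t) := by linarith
    have hYrepr : Y i = fun ω => 1 + A.indicator (fun _ => Real.exp (-(t * x i)) - 1) ω := by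
      funext ω
      by_cases h : E i ω ≤ t
      · have : ω ∈ A := h
        simp [hY, hg, h, Set.indicator_of_mem this]
      · have : ω ∉ A := h
        simp [hY, hg, h, Set.indicator_of_notMem this]
    rw [hYrepr]
    rw [integral_add (integrable_const 1)
      ((integrable_const _).indicator hAmeas)]
    rw [integral_const, integral_indicator_const _ hAmeas, probReal_univ, measureReal_def, hμA]
    simp [mul_comm]
  have hterm : ∀ i, ∫ ω, Y i ω ∂μ
      ≤ Real.exp (-(3 * ((x i * t) * (1 - Real.exp (-(x i) * t)))) / 4) := by
    intro i
    have hu : 0 ≤ x i * t := mul_nonneg (hx i).le ht.le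
    have hkey := aux_key (x i * t) hu
    have hexp_eq : Real.exp (-(x i) * t) = Real.exp (-(x i * t)) := by ring_nf
    have hexp_eq2 : Real.exp (-(t * x i)) = Real.exp (-(x i * t)) := by ring_nf
    rw [hYint_eq i, hexp_eq, hexp_eq2]
    calc 1 + (Real.exp (-(x i * t)) - 1) * (1 - Real.exp (-(x i * t)))
        = Real.exp (-(x i * t)) * (2 - Real.exp (-(x i * t))) := by ring
      _ ≤ Real.exp (-(3 * ((x i * t) * (1 - Real.exp (-(x i * t))))) / 4) := hkey
  have hf_eq : ∀ ω, Real.exp (-(t * S ω)) = ∏ i, Y i ω := by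
    intro ω
    rw [hS ω, Finset.mul_sum, ← Finset.sum_neg_distrib, Real.exp_sum]
    refine Finset.prod_congr rfl fun i _ => ?_
    by_cases h : E i ω ≤ t
    · simp [hY, hg, h]
    · simp [hY, hg, h]
  set ε := Real.exp (-(t * (ES/2))) with hε
  have hεpos : 0 < ε := Real.exp_pos _
  have hsub : {ω | S ω < ES/2} ⊆ {ω | ε ≤ Real.exp (-(t * S ω))} := by
    intro ω hω
    simp only [Set.mem_setOf_eq] at *
    exact Real.exp_le_exp.mpr (by nlinarith)
  have hfeq' : (fun ω => Real.exp (-(t * S ω))) = fun ω => ∏ i, Y i ω := funext hf_eq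
  have hf_int : Integrable (fun ω => Real.exp (-(t * S ω))) μ := by
    rw [hfeq']; exact hprodint Finset.univ
  have hmarkov := mul_meas_ge_le_integral_of_nonneg
    (Filter.Eventually.of_forall fun ω => (Real.exp_pos (-(t * S ω))).le) hf_int ε
  have hmeasmono : (μ {ω | S ω < ES/2}).toReal
      ≤ (μ {ω | ε ≤ Real.exp (-(t * S ω))}).toReal :=
    ENNReal.toReal_mono (measure_ne_top _ _) (measure_mono hsub)
  have hint_eq : ∫ ω, Real.exp (-(t * S ω)) ∂μ = ∏ i, ∫ ω, Y i ω ∂μ := by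
    rw [hfeq']; exact hprod Finset.univ
  have hsum_eq : ∑ i, -(3 * ((x i * t) * (1 - Real.exp (-(x i) * t)))) / 4
      = -(3 * (t * ES)) / 4 := by
    rw [show (∑ i, -(3 * ((x i * t) * (1 - Real.exp (-(x i) * t)))) / 4)
        = (-(3:ℝ)*t/4) * ∑ i, x i * (1 - Real.exp (-(x i) * t)) by
      rw [Finset.mul_sum]; exact Finset.sum_congr rfl fun i _ => by ring]
    rw [← hES]; ring
  have hint_le : ∫ ω, Real.exp (-(t * S ω)) ∂μ ≤ Real.exp (-(3 * (t * ES)) / 4) := by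
    rw [hint_eq]
    calc ∏ i, ∫ ω, Y i ω ∂μ
        ≤ ∏ i, Real.exp (-(3 * ((x i * t) * (1 - Real.exp (-(x i) * t)))) / 4) :=
          Finset.prod_le_prod (fun i _ => integral_nonneg fun ω => (hYpos i ω).le)
            (fun i _ => hterm i)
      _ = Real.exp (∑ i, -(3 * ((x i * t) * (1 - Real.exp (-(x i) * t)))) / 4) :=
          (Real.exp_sum _ _).symm
      _ = Real.exp (-(3 * (t * ES)) / 4) := by rw [hsum_eq]
  have hmeas_le : (μ {ω | ε ≤ Real.exp (-(t * S ω))}).toReal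
      ≤ Real.exp (-(3 * (t * ES)) / 4) / ε := by
    rw [le_div_iff₀ hεpos]
    calc (μ {ω | ε ≤ Real.exp (-(t * S ω))}).toReal * ε
        = ε * (μ {ω | ε ≤ Real.exp (-(t * S ω))}).toReal := mul_comm _ _
      _ ≤ ∫ ω, Real.exp (-(t * S ω)) ∂μ := hmarkov
      _ ≤ _ := hint_le
  have hfinal : Real.exp (-(3 * (t * ES)) / 4) / ε = Real.exp (-(t * ES) / 4) := by
    rw [hε, ← Real.exp_sub]
    congr 1
    ring
  rw [← hfinal]
  exact le_trans hmeasmono hmeas_le
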